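/- Let T be a cyclic analytic left invertible bounded operator on a nonzero complex Hilbert space H, let f ∈ H and let g ∈ ker T*. Then either σ_l(T + f⊗g) = σ_l(T) or σ_l(T + f⊗g) = σ_l(T) ∪ {⟨f,g⟩}. -/

import Mathlib

open scoped InnerProductSpace

/-- The rank one operator `f ⊗ g` given by `(f ⊗ g) h = ⟨h, g⟩ f`, where the inner
product is linear in the first argument (i.e. `⟪g, h⟫_ℂ • f` in Mathlib's convention). -/
noncomputable def rankOne {H : Type*} [NormedAddCommGroup H] [InnerProductSpace ℂ H]
    (f g : H) : H →L[ℂ] H := (innerSL ℂ g).smulRight f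

/-- The left spectrum of a bounded operator. -/
def leftSpectrum {H : Type*} [NormedAddCommGroup H] [InnerProductSpace ℂ H]
    (T : H →L[ℂ] H) : Set ℂ :=
  {l : ℂ | ¬ ∃ L : H →L[ℂ] H, L ∘L (T - l • (1 : H →L[ℂ] H)) = 1}

/-- The point spectrum (set of eigenvalues) of a bounded operator. -/
def pointSpectrum {H : Type*} [NormedAddCommGroup H] [InnerProductSpace ℂ H]
    (T : H →L[ℂ] H) : Set ℂ :=
  {l : ℂ | ∃ h : H, h ≠ 0 ∧ T h = l • h}

theorem left_spectrum_rankOne_perturbation_dichotomy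
    {H : Type*} [NormedAddCommGroup H] [InnerProductSpace ℂ H] [CompleteSpace H]
    [Nontrivial H] (T : H →L[ℂ] H)
    (hcyc : ∃ ξ : H, Dense (Submodule.span ℂ (Set.range fun n : ℕ => (T ^ n) ξ) : Set H))
    (hana : (⋂ n : ℕ, Set.range ⇑(T ^ n)) = {0})
    (hlinv : ∃ L : H →L[ℂ] H, L ∘L T = 1)
    (f g : H) (hg : g ∈ LinearMap.ker (ContinuousLinearMap.adjoint T : H →ₗ[ℂ] H)) :
    leftSpectrum (T + rankOne f g) = leftSpectrum T ∨
    leftSpectrum (T + rankOne f g) = leftSpectrum T ∪ {⟪g, f⟫_ℂ} := by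
  classical
  obtain ⟨L0, hL0⟩ := hlinv
  set K := rankOne f g with hKdef
  set c : ℂ := ⟪g, f⟫_ℂ with hc
  have hgK : ContinuousLinearMap.adjoint T g = 0 := LinearMap.mem_ker.mp hg
  have hK1 : K * T = 0 := by
    ext h
    simp only [ContinuousLinearMap.mul_apply, ContinuousLinearMap.zero_apply, hKdef,
      rankOne, ContinuousLinearMap.smulRight_apply, innerSL_apply_apply]
    rw [← ContinuousLinearMap.adjoint_inner_left, hgK]
    simp
  have hK2 : K * K = c • K := by
    ext h
    simp only [ContinuousLinearMap.mul_apply, hKdef, rankOne,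
      ContinuousLinearMap.smulRight_apply, innerSL_apply_apply, ContinuousLinearMap.smul_apply,
      inner_smul_right, hc]
    rw [mul_comm, mul_smul]
  -- key1 : left invertibility of the perturbed operator gives left invertibility of T - μ
  have key1 : ∀ μ : ℂ, (∃ M : H →L[ℂ] H, M ∘L (T + K - μ • 1) = 1) →
      ∃ L : H →L[ℂ] H, L ∘L (T - μ • 1) = 1 := by
    rintro μ ⟨M, hM⟩
    by_cases hμ : μ = 0
    · subst hμ
      exact ⟨L0, by simpa using hL0⟩
    · refine ⟨M * (1 - μ⁻¹ • K), ?_⟩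
      have hKT : K * (T - μ • 1) = (-μ) • K := by
        rw [mul_sub, hK1, mul_smul_comm, mul_one, zero_sub, neg_smul]
      have h1 : (1 - μ⁻¹ • K) * (T - μ • 1) = T + K - μ • 1 := by
        rw [sub_mul, one_mul, smul_mul_assoc, hKT, smul_smul]
        have : μ⁻¹ * -μ = -1 := by field_simp
        rw [this, neg_one_smul, sub_neg_eq_add]
        abel
      show (M * (1 - μ⁻¹ • K)) * (T - μ • 1) = 1
      rw [mul_assoc, h1]
      exact hM
  -- key2 : away from c, left invertibility of T - μ gives it for the perturbation
  have key2 : ∀ μ : ℂ, μ ≠ c → (∃ L : H →L[ℂ] H, L ∘L (T - μ • 1) = 1) →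
      ∃ M : H →L[ℂ] H, M ∘L (T + K - μ • 1) = 1 := by
    rintro μ hne ⟨L, hL⟩
    refine ⟨L * (1 - (c - μ)⁻¹ • K), ?_⟩
    have hKA : K * (T + K - μ • 1) = (c - μ) • K := by
      rw [mul_sub, mul_add, hK1, hK2, mul_smul_comm, mul_one, zero_add, sub_smul]
    have h1 : (1 - (c - μ)⁻¹ • K) * (T + K - μ • 1) = T - μ • 1 := by
      rw [sub_mul, one_mul, smul_mul_assoc, hKA, smul_smul]
      have hcμ : c - μ ≠ 0 := sub_ne_zero.mpr (Ne.symm hne)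
      rw [inv_mul_cancel₀ hcμ, one_smul]
      abel
    show (L * (1 - (c - μ)⁻¹ • K)) * (T + K - μ • 1) = 1
    rw [mul_assoc, h1]
    exact hL
  by_cases hcs : c ∈ leftSpectrum (T + K)
  · right
    ext μ
    simp only [leftSpectrum, Set.mem_setOf_eq, Set.mem_union, Set.mem_singleton_iff]
    constructor
    · intro hμ
      by_cases hμc : μ = c
      · exact Or.inr hμc
      · refine Or.inl fun hT => hμ (key2 μ hμc hT)
    · rintro (hμ | hμc)
      · exact fun hM => hμ (key1 μ hM)
      · subst hμc
        exact hcs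
  · left
    ext μ
    simp only [leftSpectrum, Set.mem_setOf_eq]
    constructor
    · intro hμ
      have hμc : μ ≠ c := by
        rintro rfl
        exact hcs hμ
      exact fun hT => hμ (key2 μ hμc hT)
    · intro hμ hM
      exact hμ (key1 μ hM)
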